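/- Let X be a normed space and Y a Banach space, let K ⊆ Y be a closed convex cone, and let f : X → Y be strongly α(·)-k-paraconvex on an open convex set Ω ⊆ X with constant C ≥ 0 and k ∈ K \ {0}. Then for every x₀ ∈ Ω and every admissible direction h ∈ X with ‖h‖ = 1, the mapping φ(t) := (f(x₀+th) − f(x₀))/t + C·(α(t)/t)·k (for t > 0) is locally K-bounded from below: there exist a ∈ Y and δ > 0 such that φ(t) − a ∈ K for all 0 < t < δ. -/

import Mathlib

open Filter Topology Set

/-- Let `f : X → Y` be strongly `α(·)`-`k`-paraconvex on an open convex
`Ω ⊆ X` with constant `C ≥ 0`, `k ∈ K \ {0}`. For `x₀ ∈ Ω` and an admissible direction `h`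
with `‖h‖ = 1`, the map `φ(t) = (f(x₀+th) − f(x₀))/t + C (α(t)/t) k` (for `t > 0`) is
locally `K`-bounded from below: there are `a ∈ Y` and `δ > 0` with `φ(t) − a ∈ K` for all
`0 < t < δ`. -/
theorem paraconvex_difference_quotient_bounded_below
    {X Y : Type*} [NormedAddCommGroup X] [NormedSpace ℝ X]
    [NormedAddCommGroup Y] [NormedSpace ℝ Y] [CompleteSpace Y]
    (K : Set Y) (hKclosed : IsClosed K) (hKconv : Convex ℝ K)
    (hKcone : ∀ ⦃c : ℝ⦄, 0 ≤ c → ∀ ⦃y⦄, y ∈ K → c • y ∈ K)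
    (k : Y) (hk : k ∈ K) (hk0 : k ≠ 0)
    (Ω : Set X) (hΩopen : IsOpen Ω) (hΩconv : Convex ℝ Ω)
    (α : ℝ → ℝ) (hαnonneg : ∀ t, 0 ≤ t → 0 ≤ α t) (hαmono : MonotoneOn α (Ici 0))
    (hαlim : Tendsto (fun t => α t / t) (𝓝[>] (0 : ℝ)) (𝓝 0))
    (f : X → Y) (hf : Continuous f) (C : ℝ) (hC : 0 ≤ C)
    (hpara : ∀ x ∈ Ω, ∀ y ∈ Ω, ∀ l : ℝ, 0 ≤ l → l ≤ 1 →
        l • f x + (1 - l) • f y + (C * min l (1 - l) * α ‖x - y‖) • k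
          - f (l • x + (1 - l) • y) ∈ K)
    (x₀ : X) (hx₀ : x₀ ∈ Ω) (h : X) (hnorm : ‖h‖ = 1)
    (hadm : ∃ ε > 0, ∀ t : ℝ, 0 < t → t < ε → x₀ + t • h ∈ Ω) :
    ∃ a : Y, ∃ δ > 0, ∀ t : ℝ, 0 < t → t < δ →
      (t⁻¹ • (f (x₀ + t • h) - f x₀) + (C * (α t / t)) • k) - a ∈ K := by
  -- K is closed under addition
  have Kadd : ∀ u ∈ K, ∀ v ∈ K, u + v ∈ K := by
    intro u hu v hv
    have h2 : ((1:ℝ)/2) • u + ((1:ℝ)/2) • v ∈ K :=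
      hKconv hu hv (by norm_num) (by norm_num) (by norm_num)
    have := hKcone (by norm_num : (0:ℝ) ≤ 2) h2
    convert this using 1
    module
  obtain ⟨ε, hε, hεΩ⟩ := hadm
  obtain ⟨r, hr, hball⟩ := Metric.isOpen_iff.1 hΩopen x₀ hx₀
  obtain ⟨s, hs, hsr⟩ : ∃ s : ℝ, 0 < s ∧ s < r := ⟨r/2, by positivity, by linarith⟩
  have hy : x₀ - s • h ∈ Ω := by
    apply hball
    simp only [Metric.mem_ball, dist_eq_norm]
    have heq : x₀ - s • h - x₀ = -(s • h) := by abel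
    rw [heq, norm_neg, norm_smul, hnorm, Real.norm_eq_abs, abs_of_pos hs, mul_one]
    exact hsr
  refine ⟨s⁻¹ • (f x₀ - f (x₀ - s • h)) - (C * α (ε + s) / s) • k, ε, hε, ?_⟩
  intro t ht htε
  have hst : 0 < s + t := by linarith
  obtain ⟨l, hl_def⟩ : ∃ l : ℝ, l = s / (s + t) := ⟨_, rfl⟩
  have hl0 : 0 < l := by rw [hl_def]; positivity
  have hl1 : l < 1 := by rw [hl_def, div_lt_one hst]; linarith
  have hx : x₀ + t • h ∈ Ω := hεΩ t ht htε
  have key := hpara _ hx _ hy l hl0.le hl1.le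
  have hxy : (x₀ + t • h) - (x₀ - s • h) = (s + t) • h := by module
  have hnormval : ‖(x₀ + t • h) - (x₀ - s • h)‖ = s + t := by
    rw [hxy, norm_smul, hnorm, Real.norm_eq_abs, abs_of_pos hst, mul_one]
  have hcomb : l • (x₀ + t • h) + (1 - l) • (x₀ - s • h) = x₀ := by
    have h1 : l * t - (1 - l) * s = 0 := by
      rw [hl_def]; field_simp; ring
    have heq : l • (x₀ + t • h) + (1 - l) • (x₀ - s • h)
        = x₀ + (l * t - (1 - l) * s) • h := by module
    rw [heq, h1]; simp
  rw [hnormval, hcomb] at key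
  obtain ⟨c, hc_def⟩ : ∃ c : ℝ, c = (t * l)⁻¹ := ⟨_, rfl⟩
  have hc : 0 < c := by rw [hc_def]; positivity
  have hM := hKcone hc.le key
  have hts : t ≠ 0 := ht.ne'
  have hss : s ≠ 0 := hs.ne'
  have hls : l ≠ 0 := hl0.ne'
  have hsts : s + t ≠ 0 := hst.ne'
  obtain ⟨β, hβ_def⟩ : ∃ β : ℝ,
      β = C * (α t / t) + C * α (ε + s) / s - c * (C * min l (1 - l) * α (s + t)) :=
    ⟨_, rfl⟩
  have hβ : 0 ≤ β := by
    have h1 : 0 ≤ C * (α t / t) := by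
      have := hαnonneg t ht.le
      positivity
    have hmin : min l (1 - l) ≤ 1 - l := min_le_right _ _
    have hαst : 0 ≤ α (s + t) := hαnonneg _ hst.le
    have h2 : c * (C * min l (1 - l) * α (s + t)) ≤ c * (C * (1 - l) * α (s + t)) := by
      apply mul_le_mul_of_nonneg_left _ hc.le
      apply mul_le_mul_of_nonneg_right _ hαst
      exact mul_le_mul_of_nonneg_left hmin hC
    have h3 : c * (C * (1 - l) * α (s + t)) = C * α (s + t) / s := by
      rw [hc_def, hl_def]; field_simp; ring
    have h4 : α (s + t) ≤ α (ε + s) :=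
      hαmono (by simp [hst.le]) (by simp; linarith) (by linarith)
    have h5 : C * α (s + t) / s ≤ C * α (ε + s) / s := by
      gcongr
    rw [hβ_def]
    linarith
  have hβk := hKcone hβ hk
  have hsum := Kadd _ hM _ hβk
  convert hsum using 1
  rw [hβ_def, hc_def, hl_def]
  match_scalars <;> · field_simp <;> ring
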